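/- arXiv:1809.07933 — 11 statements merged into one kernel-verified Lean document; each statement's English description precedes it below -/
import Mathlib

section
/- In any semi De Morgan algebra, the kernel K with operations α ∪ β := h((e(α) ∨ e(β))''), α ∩ β := h(e(α) ∧ e(β)), 1 := h(⊤), 0 := h(⊥), satisfies the absorption law: α ∪ (α ∩ β) = α for all α, β ∈ K. -/
/-- A semi De Morgan algebra: a bounded distributive lattice with a unary
operation `neg` satisfying (S2)-(S5). -/
class SemiDeMorgan (L : Type*) extends DistribLattice L, BoundedOrder L where
  neg : L → L
  neg_bot : neg ⊥ = ⊤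
  neg_top : neg ⊤ = ⊥
  neg_sup : ∀ a b : L, neg (a ⊔ b) = neg a ⊓ neg b
  neg_neg_inf : ∀ a b : L, neg (neg (a ⊓ b)) = neg (neg a) ⊓ neg (neg b)
  neg_neg_neg : ∀ a : L, neg (neg (neg a)) = neg a

namespace SemiDeMorgan

variable {L : Type*} [SemiDeMorgan L]

/-- The kernel `K = {a'' : a ∈ L}`. -/
abbrev Kernel (L : Type*) [SemiDeMorgan L] : Type _ :=
  {x : L // ∃ a : L, x = neg (neg a)}

/-- `h : L → K`, `a ↦ a''`. -/
def h (a : L) : Kernel L := ⟨neg (neg a), a, rfl⟩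

/-- `e : K → L`, the natural inclusion. -/
def e (α : Kernel L) : L := α.1

/-- `α ∩ β := h (e α ∧ e β)` -/
def kcap (α β : Kernel L) : Kernel L := h (e α ⊓ e β)

/-- `α ∪ β := h ((e α ∨ e β)'')` -/
def kcup (α β : Kernel L) : Kernel L := h (neg (neg (e α ⊔ e β)))

/-- `α* := h ((e α)')` -/
def kstar (α : Kernel L) : Kernel L := h (neg (e α))

/-- `1 := h ⊤` -/
def kone : Kernel L := h (⊤ : L)

/-- `0 := h ⊥` -/
def kzero : Kernel L := h (⊥ : L)

theorem neg_le_neg {a b : L} (hab : a ≤ b) : neg b ≤ neg a := by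
  have h1 : a ⊔ b = b := sup_eq_right.mpr hab
  rw [← h1, neg_sup]; exact inf_le_left

/-- Absorption law in the kernel: `α ∪ (α ∩ β) = α`. -/
theorem kernel_absorption (α β : Kernel L) : kcup α (kcap α β) = α := by
  obtain ⟨x, a, ha⟩ := α
  have hx : neg (neg x) = x := by rw [ha, neg_neg_neg]
  have hle : neg (neg (x ⊓ e β)) ≤ x := by
    calc neg (neg (x ⊓ e β)) ≤ neg (neg x) := neg_le_neg (neg_le_neg inf_le_left)
    _ = x := hx
  apply Subtype.ext
  show neg (neg (neg (neg (e ⟨x, a, ha⟩ ⊔ e (kcap ⟨x, a, ha⟩ β))))) = x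
  have : e (⟨x, a, ha⟩ : Kernel L) = x := rfl
  rw [this]
  have he : e (kcap (⟨x, a, ha⟩ : Kernel L) β) = neg (neg (x ⊓ e β)) := rfl
  rw [he, sup_eq_left.mpr hle, hx, hx]

end SemiDeMorgan
end

section
/- In any semi De Morgan algebra, the kernel K with the operations ∩ and ∪ defined via h and e satisfies the distributive law: α ∩ (β ∪ γ) = (α ∩ β) ∪ (α ∩ γ) for all α, β, γ ∈ K. -/
namespace SemiDeMorgan

variable {L : Type*} [SemiDeMorgan L]

/-- Distributivity law in the kernel: `α ∩ (β ∪ γ) = (α ∩ β) ∪ (α ∩ γ)`. -/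
theorem kernel_distrib (α β γ : Kernel L) :
    kcap α (kcup β γ) = kcup (kcap α β) (kcap α γ) := by
  obtain ⟨a, x, hx⟩ := α
  obtain ⟨b, y, hy⟩ := β
  obtain ⟨c, z, hz⟩ := γ
  have ha : neg (neg a) = a := by rw [hx, neg_neg_neg]
  apply Subtype.ext
  simp only [kcap, kcup, h, e]
  simp only [neg_neg_neg]
  have key : neg (neg (neg (a ⊓ b)) ⊔ neg (neg (a ⊓ c))) = neg ((a ⊓ b) ⊔ (a ⊓ c)) := by
    rw [neg_sup, neg_neg_neg, neg_neg_neg, ← neg_sup]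
  rw [key, ← inf_sup_left, neg_neg_inf, neg_neg_inf, ha, neg_neg_neg]

end SemiDeMorgan
end

section
/- In any semi De Morgan algebra, the kernel operation α* := h(e(α)') satisfies the De Morgan law (α ∪ β)* = α* ∩ β* for all α, β in the kernel K. -/
namespace SemiDeMorgan

variable {L : Type*} [SemiDeMorgan L]

/-- De Morgan law in the kernel: `(α ∪ β)* = α* ∩ β*`. -/
theorem kernel_star_cup (α β : Kernel L) :
    kstar (kcup α β) = kcap (kstar α) (kstar β) := by
  unfold kstar kcup kcap h e
  apply Subtype.ext
  simp only [neg_neg_neg, neg_sup]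

end SemiDeMorgan
end

section
/- In any semi De Morgan algebra, the kernel operation α* := h(e(α)') satisfies the De Morgan law (α ∩ β)* = α* ∪ β* for all α, β in the kernel K. -/
namespace SemiDeMorgan

variable {L : Type*} [SemiDeMorgan L]

/-- De Morgan law in the kernel: `(α ∩ β)* = α* ∪ β*`. -/
theorem kernel_star_cap (α β : Kernel L) :
    kstar (kcap α β) = kcup (kstar α) (kstar β) := by
  obtain ⟨x, a, ha⟩ := α
  obtain ⟨y, b, hb⟩ := β
  apply Subtype.ext
  simp only [kstar, kcap, kcup, h, e]
  subst ha hb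
  simp only [neg_neg_inf, neg_neg_neg, neg_sup]

end SemiDeMorgan
end

section
/- If A is a demi pseudocomplemented lattice (a semi De Morgan algebra additionally satisfying a' ∧ a'' = ⊥ for all a), then the kernel of A is a Boolean algebra; in particular α ∩ α* = 0 for all α ∈ K. -/
namespace SemiDeMorgan

variable {L : Type*} [SemiDeMorgan L]

lemma nn_nn (a : L) : neg (neg (neg (neg a))) = neg (neg a) :=
  congrArg neg (neg_neg_neg a)

lemma h_eq {a b : L} (hab : neg (neg a) = neg (neg b)) : h a = h b :=
  Subtype.ext hab

lemma h_surj (α : Kernel L) : ∃ a : L, α = h a := by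
  obtain ⟨x, a, hx⟩ := α
  exact ⟨a, Subtype.ext hx⟩

lemma h_nn (a : L) : h (neg (neg a)) = h a := h_eq (nn_nn a)

lemma nn_sup_nn (a b : L) :
    neg (neg (neg (neg a) ⊔ neg (neg b))) = neg (neg (a ⊔ b)) := by
  have : neg (neg (neg a) ⊔ neg (neg b)) = neg (a ⊔ b) := by
    rw [neg_sup, neg_neg_neg, neg_neg_neg, ← neg_sup]
  rw [this]

lemma hcap (a b : L) : kcap (h a) (h b) = h (a ⊓ b) := by
  apply h_eq
  show neg (neg (neg (neg a) ⊓ neg (neg b))) = _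
  rw [neg_neg_inf, nn_nn, nn_nn, ← neg_neg_inf]

lemma hcup (a b : L) : kcup (h a) (h b) = h (a ⊔ b) := by
  apply h_eq
  show neg (neg (neg (neg (neg (neg a) ⊔ neg (neg b))))) = _
  rw [nn_sup_nn, nn_nn]

lemma hstar (a : L) : kstar (h a) = h (neg a) := by
  apply h_eq
  show neg (neg (neg (neg (neg a)))) = _
  rw [nn_nn]

/-- If `A` is a demi pseudocomplemented lattice (an SMA with `a' ∧ a'' = ⊥`),
then its kernel is a Boolean algebra: a De Morgan algebra additionally
satisfying `α ∩ α* = 0`. -/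
theorem kernel_isBoolean
    (hdpl : ∀ a : L, neg a ⊓ neg (neg a) = ⊥) :
    ((∀ α β : Kernel L, kcap α β = kcap β α) ∧
     (∀ α β : Kernel L, kcup α β = kcup β α) ∧
     (∀ α β γ : Kernel L, kcap (kcap α β) γ = kcap α (kcap β γ)) ∧
     (∀ α β γ : Kernel L, kcup (kcup α β) γ = kcup α (kcup β γ)) ∧
     (∀ α β : Kernel L, kcap α (kcup α β) = α) ∧
     (∀ α β : Kernel L, kcup α (kcap α β) = α) ∧
     (∀ α β γ : Kernel L, kcap α (kcup β γ) = kcup (kcap α β) (kcap α γ)) ∧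
     (∀ α : Kernel L, kcap α kone = α) ∧
     (∀ α : Kernel L, kcup α kzero = α) ∧
     kstar (kzero : Kernel L) = kone ∧
     kstar (kone : Kernel L) = kzero ∧
     (∀ α β : Kernel L, kstar (kcup α β) = kcap (kstar α) (kstar β)) ∧
     (∀ α β : Kernel L, kstar (kcap α β) = kcup (kstar α) (kstar β)) ∧
     (∀ α : Kernel L, kstar (kstar α) = α)) ∧
    (∀ α : Kernel L, kcap α (kstar α) = kzero) := by
  refine ⟨⟨?_, ?_, ?_, ?_, ?_, ?_, ?_, ?_, ?_, ?_, ?_, ?_, ?_, ?_⟩, ?_⟩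
  · intro α β
    obtain ⟨a, rfl⟩ := h_surj α; obtain ⟨b, rfl⟩ := h_surj β
    rw [hcap, hcap, inf_comm]
  · intro α β
    obtain ⟨a, rfl⟩ := h_surj α; obtain ⟨b, rfl⟩ := h_surj β
    rw [hcup, hcup, sup_comm]
  · intro α β γ
    obtain ⟨a, rfl⟩ := h_surj α; obtain ⟨b, rfl⟩ := h_surj β
    obtain ⟨c, rfl⟩ := h_surj γ
    rw [hcap, hcap, hcap, hcap, inf_assoc]
  · intro α β γ
    obtain ⟨a, rfl⟩ := h_surj α; obtain ⟨b, rfl⟩ := h_surj β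
    obtain ⟨c, rfl⟩ := h_surj γ
    rw [hcup, hcup, hcup, hcup, sup_assoc]
  · intro α β
    obtain ⟨a, rfl⟩ := h_surj α; obtain ⟨b, rfl⟩ := h_surj β
    rw [hcup, hcap, inf_sup_self]
  · intro α β
    obtain ⟨a, rfl⟩ := h_surj α; obtain ⟨b, rfl⟩ := h_surj β
    rw [hcap, hcup, sup_inf_self]
  · intro α β γ
    obtain ⟨a, rfl⟩ := h_surj α; obtain ⟨b, rfl⟩ := h_surj β
    obtain ⟨c, rfl⟩ := h_surj γ
    rw [hcup, hcap, hcap, hcap, hcup, inf_sup_left]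
  · intro α
    obtain ⟨a, rfl⟩ := h_surj α
    show kcap (h a) (h ⊤) = h a
    rw [hcap, inf_top_eq]
  · intro α
    obtain ⟨a, rfl⟩ := h_surj α
    show kcup (h a) (h ⊥) = h a
    rw [hcup, sup_bot_eq]
  · show kstar (h (⊥ : L)) = h (⊤ : L)
    rw [hstar, neg_bot]
  · show kstar (h (⊤ : L)) = h (⊥ : L)
    rw [hstar, neg_top]
  · intro α β
    obtain ⟨a, rfl⟩ := h_surj α; obtain ⟨b, rfl⟩ := h_surj β
    rw [hcup, hstar, hstar, hstar, hcap, neg_sup]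
  · intro α β
    obtain ⟨a, rfl⟩ := h_surj α; obtain ⟨b, rfl⟩ := h_surj β
    rw [hcap, hstar, hstar, hstar, hcup]
    apply h_eq
    show neg (neg (neg (a ⊓ b))) = neg (neg (neg a ⊔ neg b))
    rw [neg_neg_neg, neg_sup]
    conv_lhs => rw [← neg_neg_neg (a ⊓ b)]
    rw [neg_neg_inf]
  · intro α
    obtain ⟨a, rfl⟩ := h_surj α
    rw [hstar, hstar, h_nn]
  · intro α
    obtain ⟨a, rfl⟩ := h_surj α
    rw [hstar, hcap]
    show h (a ⊓ neg a) = h ⊥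
    apply h_eq
    rw [neg_neg_inf, neg_neg_neg, neg_bot, neg_top, inf_comm, hdpl]

end SemiDeMorgan
end

section
/- For any semi De Morgan algebra A, the map h : L → K, a ↦ a'', is a surjective bounded lattice homomorphism from the lattice reduct of A onto the kernel: h(a ∧ b) = h(a) ∩ h(b), h(a ∨ b) = h(a) ∪ h(b), h(⊤) = 1, h(⊥) = 0. -/
namespace SemiDeMorgan

variable {L : Type*} [SemiDeMorgan L]

/-- `h : L → K` is a surjective bounded lattice homomorphism onto the kernel. -/
theorem h_hom :
    Function.Surjective (h : L → Kernel L) ∧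
    (∀ a b : L, h (a ⊓ b) = kcap (h a) (h b)) ∧
    (∀ a b : L, h (a ⊔ b) = kcup (h a) (h b)) ∧
    h (⊤ : L) = kone ∧
    h (⊥ : L) = kzero := by
  refine ⟨?_, ?_, ?_, rfl, rfl⟩
  · rintro ⟨x, a, rfl⟩
    exact ⟨a, Subtype.ext (by simp [h, neg_neg_neg])⟩
  · intro a b
    apply Subtype.ext
    simp [h, kcap, e, neg_neg_inf, neg_neg_neg]
  · intro a b
    apply Subtype.ext
    show neg (neg (a ⊔ b)) = neg (neg (neg (neg (neg (neg a) ⊔ neg (neg b)))))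
    have key : neg (neg (neg a) ⊔ neg (neg b)) = neg (a ⊔ b) := by
      rw [neg_sup, neg_sup, neg_neg_neg, neg_neg_neg]
    rw [neg_neg_neg, key]

end SemiDeMorgan
end

section
/- If H = (L, D, e, h) is a heterogeneous semi De Morgan algebra, then defining a' := e(h(a)*) on L makes (L, ') a semi De Morgan algebra; i.e., ' satisfies ⊥' = ⊤, ⊤' = ⊥, (a ∨ b)' = a' ∧ b', (a ∧ b)'' = a'' ∧ b'', and a''' = a'. -/
/-- A heterogeneous semi De Morgan algebra `(L, D, e, h)`:
`L` a bounded distributive lattice, `D` a De Morgan algebra (with involution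
`star` satisfying the De Morgan laws), `e : D → L` an order embedding
preserving finite meets and the bounds, `h : L → D` a surjective bounded
lattice homomorphism, and `h ∘ e = id`. -/
structure HSMA (L D : Type*) [DistribLattice L] [BoundedOrder L]
    [DistribLattice D] [BoundedOrder D] where
  star : D → D
  star_zero : star ⊥ = ⊤
  star_one : star ⊤ = ⊥
  star_cup : ∀ α β : D, star (α ⊔ β) = star α ⊓ star β
  star_cap : ∀ α β : D, star (α ⊓ β) = star α ⊔ star β
  star_star : ∀ α : D, star (star α) = α
  e : D → L
  e_le_iff : ∀ α β : D, e α ≤ e β ↔ α ≤ β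
  e_cap : ∀ α β : D, e (α ⊓ β) = e α ⊓ e β
  e_one : e ⊤ = ⊤
  e_zero : e ⊥ = ⊥
  h : L → D
  h_surj : Function.Surjective h
  h_inf : ∀ a b : L, h (a ⊓ b) = h a ⊓ h b
  h_sup : ∀ a b : L, h (a ⊔ b) = h a ⊔ h b
  h_top : h ⊤ = ⊤
  h_bot : h ⊥ = ⊥
  h_e : ∀ α : D, h (e α) = α

variable {L D : Type*} [DistribLattice L] [BoundedOrder L]
  [DistribLattice D] [BoundedOrder D]

/-- The derived semi De Morgan negation on `L`: `a' := e ((h a)*)`. -/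
def HSMA.neg (H : HSMA L D) (a : L) : L := H.e (H.star (H.h a))

/-- If `H` is a heterogeneous semi De Morgan algebra, then `a' := e ((h a)*)`
makes `(L, ')` a semi De Morgan algebra. -/
theorem HSMA.neg_isSemiDeMorgan (H : HSMA L D) :
    H.neg ⊥ = ⊤ ∧
    H.neg ⊤ = ⊥ ∧
    (∀ a b : L, H.neg (a ⊔ b) = H.neg a ⊓ H.neg b) ∧
    (∀ a b : L, H.neg (H.neg (a ⊓ b)) = H.neg (H.neg a) ⊓ H.neg (H.neg b)) ∧
    (∀ a : L, H.neg (H.neg (H.neg a)) = H.neg a) := by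
  have hneg : ∀ x : L, H.h (H.neg x) = H.star (H.h x) := fun x => H.h_e _
  have hnn : ∀ x : L, H.neg (H.neg x) = H.e (H.h x) := by
    intro x
    simp [HSMA.neg, H.h_e, H.star_star]
  refine ⟨?_, ?_, ?_, ?_, ?_⟩
  · simp [HSMA.neg, H.h_bot, H.star_zero, H.e_one]
  · simp [HSMA.neg, H.h_top, H.star_one, H.e_zero]
  · intro a b; simp [HSMA.neg, H.h_sup, H.star_cup, H.e_cap]
  · intro a b; simp [hnn, H.h_inf, H.e_cap]
  · intro a; rw [hnn]; simp [HSMA.neg, H.h_e]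
end

section
/- In any heterogeneous semi De Morgan algebra with a' := e(h(a)*), the identities K2–K6 hold in D: α ∪ β = h((e(α) ∨ e(β))''), α ∩ β = h(e(α) ∧ e(β)), 1 = h(⊤), 0 = h(⊥), and α* = h(e(α)') for all α, β ∈ D. -/
variable {L D : Type*} [DistribLattice L] [BoundedOrder L]
  [DistribLattice D] [BoundedOrder D]

/-- In any HSMA with `a' := e ((h a)*)`, the kernel identities K2–K6 hold
in `D`. -/
theorem HSMA.kernel_identities (H : HSMA L D) :
    (∀ α β : D, α ⊔ β = H.h (H.neg (H.neg (H.e α ⊔ H.e β)))) ∧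
    (∀ α β : D, α ⊓ β = H.h (H.e α ⊓ H.e β)) ∧
    (⊤ : D) = H.h (⊤ : L) ∧
    (⊥ : D) = H.h (⊥ : L) ∧
    (∀ α : D, H.star α = H.h (H.neg (H.e α))) := by
  refine ⟨fun α β => ?_, fun α β => ?_, ?_, ?_, fun α => ?_⟩
  · simp [HSMA.neg, H.h_e, H.star_star, H.h_sup]
  · rw [H.h_inf, H.h_e, H.h_e]
  · rw [H.h_top]
  · rw [H.h_bot]
  · simp [HSMA.neg, H.h_e]
end

section
/- If H = (L, D, e, h) is a heterogeneous lower quasi De Morgan algebra (an HSMA with a ≤ e(h(a)) for all a ∈ L), then the induced semi De Morgan algebra (L, ') with a' := e(h(a)*) satisfies a ≤ a'' for all a ∈ L. -/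
variable {L D : Type*} [DistribLattice L] [BoundedOrder L]
  [DistribLattice D] [BoundedOrder D]

/-- If `H` is a heterogeneous lower quasi De Morgan algebra
(`a ≤ e (h a)` for all `a`), then the induced SMA satisfies `a ≤ a''`. -/
theorem HSMA.le_neg_neg (H : HSMA L D)
    (hlq : ∀ a : L, a ≤ H.e (H.h a)) :
    ∀ a : L, a ≤ H.neg (H.neg a) := by
  intro a
  have : H.neg (H.neg a) = H.e (H.h a) := by
    simp [HSMA.neg, H.h_e, H.star_star]
  rw [this]
  exact hlq a
end

section
/- If A is an almost pseudocomplemented lattice (an SMA satisfying a ∧ a' = ⊥), then in A⁺ = (L, K, e, h) the identity e(h(a)*) ∧ a = ⊥ holds for all a ∈ L, where α* := h(e(α)'). -/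
namespace SemiDeMorgan

variable {L : Type*} [SemiDeMorgan L]

/-- If `A` is an almost pseudocomplemented lattice (`a ∧ a' = ⊥`), then in
`A⁺` the identity `e ((h a)*) ∧ a = ⊥` holds for all `a ∈ L`. -/
theorem e_kstar_h_inf (hap : ∀ a : L, a ⊓ neg a = ⊥) :
    ∀ a : L, e (kstar (h a)) ⊓ a = ⊥ := by
  intro a
  show neg (neg (neg (neg (neg a)))) ⊓ a = ⊥
  rw [neg_neg_neg, neg_neg_neg, inf_comm, hap]

end SemiDeMorgan
end

section
/- If H = (L, D, e, h) is a heterogeneous semi De Morgan algebra and ' is defined by a' := e(h(a)*), then the map h restricted appropriately yields an isomorphism of De Morgan algebras between D and the kernel K of the induced semi De Morgan algebra (L, '): the order-isomorphism f : D → K given by f = e (corestricted to K = Range(e)) satisfies f(α ∩ β) = f(α) ∩_K f(β), f(α ∪ β) = f(α) ∪_K f(β), and f(α*) = f(α)^{*_K}. -/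
variable {L D : Type*} [DistribLattice L] [BoundedOrder L]
  [DistribLattice D] [BoundedOrder D]

/-- The kernel `K = {a'' : a ∈ L}` of the induced semi De Morgan algebra. -/
def HSMA.Kernel (H : HSMA L D) : Type _ :=
  {x : L // ∃ a : L, x = H.neg (H.neg a)}

/-- `h_K : L → K`, `a ↦ a''`. -/
def HSMA.hK (H : HSMA L D) (a : L) : H.Kernel := ⟨H.neg (H.neg a), a, rfl⟩

/-- `e_K : K → L`, the inclusion. -/
def HSMA.eK (H : HSMA L D) (α : H.Kernel) : L := α.1

/-- `α ∩_K β := h_K (e_K α ∧ e_K β)` -/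
def HSMA.kcap (H : HSMA L D) (α β : H.Kernel) : H.Kernel :=
  H.hK (H.eK α ⊓ H.eK β)

/-- `α ∪_K β := h_K ((e_K α ∨ e_K β)'')` -/
def HSMA.kcup (H : HSMA L D) (α β : H.Kernel) : H.Kernel :=
  H.hK (H.neg (H.neg (H.eK α ⊔ H.eK β)))

/-- `α^{*_K} := h_K ((e_K α)')` -/
def HSMA.kstar (H : HSMA L D) (α : H.Kernel) : H.Kernel :=
  H.hK (H.neg (H.eK α))

/-- `f : D → K`, the corestriction of `e` to the kernel. -/
def HSMA.f (H : HSMA L D) (α : D) : H.Kernel := H.hK (H.e α)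

/-- `f : D → K` is an order-isomorphism of De Morgan algebras between `D` and
the kernel of the induced semi De Morgan algebra: `f` is `e` corestricted to
`K = Range e`, is bijective, reflects and preserves order, and preserves
`∩`, `∪` and `*`. -/
theorem HSMA.f_isDeMorganIso (H : HSMA L D) :
    (∀ α : D, H.eK (H.f α) = H.e α) ∧
    Function.Bijective H.f ∧
    (∀ α β : D, H.eK (H.f α) ≤ H.eK (H.f β) ↔ α ≤ β) ∧
    (∀ α β : D, H.f (α ⊓ β) = H.kcap (H.f α) (H.f β)) ∧
    (∀ α β : D, H.f (α ⊔ β) = H.kcup (H.f α) (H.f β)) ∧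
    (∀ α : D, H.f (H.star α) = H.kstar (H.f α)) := by
  have e_inj : Function.Injective H.e := fun a b hab =>
    le_antisymm ((H.e_le_iff a b).mp hab.le) ((H.e_le_iff b a).mp hab.ge)
  have negneg : ∀ a : L, H.neg (H.neg a) = H.e (H.h a) := by
    intro a
    simp only [HSMA.neg, H.h_e, H.star_star]
  have val_f : ∀ α : D, (H.f α).1 = H.e α := by
    intro α
    simp only [HSMA.f, HSMA.hK, negneg, H.h_e]
  have eK_f : ∀ α : D, H.eK (H.f α) = H.e α := fun α => val_f α
  refine ⟨eK_f, ⟨?_, ?_⟩, ?_, ?_, ?_, ?_⟩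
  · intro a b hab
    apply e_inj
    rw [← val_f a, ← val_f b, hab]
  · rintro ⟨x, a, rfl⟩
    refine ⟨H.h a, Subtype.ext ?_⟩
    rw [val_f]
    exact (negneg a).symm
  · intro α β
    rw [eK_f, eK_f, H.e_le_iff]
  · intro α β
    apply Subtype.ext
    rw [val_f]
    show _ = H.neg (H.neg (H.eK (H.f α) ⊓ H.eK (H.f β)))
    rw [negneg, eK_f, eK_f, ← H.e_cap, H.h_e]
  · intro α β
    apply Subtype.ext
    rw [val_f]
    show _ = H.neg (H.neg (H.neg (H.neg (H.eK (H.f α) ⊔ H.eK (H.f β)))))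
    rw [negneg, negneg, H.h_e, eK_f, eK_f, H.h_sup, H.h_e, H.h_e]
  · intro α
    apply Subtype.ext
    rw [val_f]
    show _ = H.neg (H.neg (H.neg (H.eK (H.f α))))
    rw [negneg, eK_f, HSMA.neg, H.h_e, H.h_e]
end
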